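/- Let G be a group with finitely generated abelianisation and fr(G) = {1}, let A be a finitely generated abelian group, and let 1 → A → E → G → 1 be a central extension that is pulled back from an abelian extension 1 → A → E' → G^{ab} → 1 along the abelianisation map G → G^{ab}. Then fr(E) = {1}. -/

import Mathlib

open DirectSum

/-- Any nonzero element of a finitely generated abelian group is detected by a
homomorphism to a finite abelian group. -/
lemma exists_addHom_ne_zero (M : Type*) [AddCommGroup M] [AddGroup.FG M] {y : M} (hy : y ≠ 0) :
    ∃ (F : Type) (_ : AddCommGroup F) (_ : Finite F) (φ : M →+ F), φ y ≠ 0 := by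
  obtain ⟨n, ι, fι, p, hp, e, ⟨σ⟩⟩ := AddCommGroup.equiv_free_prod_directSum_zmod M
  haveI : ∀ i, NeZero (p i ^ e i) := fun i => ⟨pow_ne_zero _ (hp i).pos.ne'⟩
  haveI : Finite (⨁ i : ι, ZMod (p i ^ e i)) :=
    Finite.of_injective (fun (v : ⨁ i : ι, ZMod (p i ^ e i)) => (v : ∀ i, ZMod (p i ^ e i)))
      DFunLike.coe_injective
  have hz : σ y ≠ 0 := fun h => hy (by simpa using congrArg σ.symm h)
  by_cases h2 : (σ y).2 = 0
  · -- first component nonzero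
    have h1 : (σ y).1 ≠ 0 := by
      intro h1
      exact hz (Prod.ext h1 h2)
    obtain ⟨i, hi⟩ := Finsupp.ne_iff.mp h1
    simp only [Finsupp.coe_zero, Pi.zero_apply] at hi
    set m : ℕ := ((σ y).1 i).natAbs + 1 with hm
    haveI : NeZero m := ⟨Nat.succ_ne_zero _⟩
    refine ⟨ZMod m, inferInstance, inferInstance,
      ((Int.castAddHom (ZMod m)).comp ((Finsupp.applyAddHom i).comp
        ((AddMonoidHom.fst _ _).comp σ.toAddMonoidHom))), ?_⟩
    simp only [AddMonoidHom.coe_comp, Function.comp_apply, AddEquiv.coe_toAddMonoidHom,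
      AddMonoidHom.coe_fst, Finsupp.applyAddHom_apply, Int.coe_castAddHom]
    intro h
    rw [ZMod.intCast_zmod_eq_zero_iff_dvd] at h
    have := Int.le_of_dvd (abs_pos.mpr hi) ((dvd_abs _ _).mpr h)
    rw [Int.abs_eq_natAbs] at this
    omega
  · refine ⟨⨁ i : ι, ZMod (p i ^ e i), inferInstance, inferInstance,
      ((AddMonoidHom.snd _ _).comp σ.toAddMonoidHom), ?_⟩
    simpa using h2

/-- Multiplicative version: any element `≠ 1` of a finitely generated commutative group is
detected by a homomorphism to a finite group. -/
lemma exists_monoidHom_ne_one {M : Type*} [CommGroup M] [Group.FG M] {y : M} (hy : y ≠ 1) :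
    ∃ (F : Type) (_ : Group F) (_ : Finite F) (φ : M →* F), φ y ≠ 1 := by
  have hy' : (Additive.ofMul y : Additive M) ≠ 0 := hy
  obtain ⟨F, _, _, φ, hφ⟩ := exists_addHom_ne_zero (Additive M) hy'
  exact ⟨Multiplicative F, inferInstance, inferInstance, AddMonoidHom.toMultiplicativeRight φ, hφ⟩

/-- The finite residual of a group: the intersection of all finite-index normal subgroups. -/
def finiteResidual (G : Type*) [Group G] : Subgroup G :=
  ⨅ (H : Subgroup G) (_ : H.Normal) (_ : H.FiniteIndex), H

/-- Let `G` be a group with finitely generated abelianisation and trivial finite residual,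
`A = ker π` a finitely generated central subgroup of `E` with `E/A ≅ G` (via a surjection
`π : E → G`), and suppose the central extension `1 → A → E → G → 1` is pulled back from an
abelian extension `1 → A → E' → G^ab → 1` along the abelianisation map `G → G^ab`
(witnessed by a homomorphism `f : E → E'` over `G → G^ab` restricting to an isomorphism
of `A = ker π` onto `ker p'`). Then `fr(E) = {1}`. -/
theorem finiteResidual_eq_bot_of_pullback_abelian_extension
    {E G E' : Type*} [Group E] [Group G] [CommGroup E']
    (π : E →* G) (hπ : Function.Surjective π)
    (hcent : π.ker ≤ Subgroup.center E)
    (hA : Group.FG π.ker)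
    (hab : Group.FG (Abelianization G))
    (hG : finiteResidual G = ⊥)
    (p' : E' →* Abelianization G) (f : E →* E')
    (hover : ∀ x : E, p' (f x) = Abelianization.of (π x))
    (hinjA : ∀ a ∈ π.ker, ∀ b ∈ π.ker, f a = f b → a = b)
    (hkerA : Subgroup.map f π.ker = p'.ker) :
    finiteResidual E = ⊥ := by
  rw [Subgroup.eq_bot_iff_forall]
  intro x hx
  have hx' : ∀ H : Subgroup E, H.Normal → H.FiniteIndex → x ∈ H := by
    simpa [finiteResidual, Subgroup.mem_iInf] using hx
  -- Step 1: x lies in the kernel of π since fr(G) is trivial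
  have hxker : x ∈ π.ker := by
    have hπx : π x ∈ finiteResidual G := by
      simp only [finiteResidual, Subgroup.mem_iInf]
      intro H hN hF
      have h1 : (H.comap π).Normal := hN.comap π
      have h2 : (H.comap π).FiniteIndex :=
        ⟨by rw [Subgroup.index_comap_of_surjective _ hπ]; exact hF.index_ne_zero⟩
      exact hx' _ h1 h2
    rw [hG, Subgroup.mem_bot] at hπx
    exact hπx
  by_contra hx1
  -- f x ≠ 1
  have hfx : f x ≠ 1 := fun h =>
    hx1 (hinjA x hxker 1 (one_mem _) (by rw [h, map_one]))
  -- p' is surjective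
  have hp's : Function.Surjective p' := by
    intro c
    obtain ⟨g, rfl⟩ : ∃ g, Abelianization.of g = c :=
      QuotientGroup.induction_on c fun g => ⟨g, rfl⟩
    obtain ⟨a, rfl⟩ := hπ g
    exact ⟨f a, hover a⟩
  -- E' is finitely generated
  haveI hA' := hA
  haveI : Group.FG E' := by
    set q : Additive E' →+ Additive (Abelianization G) := MonoidHom.toAdditive p' with hq
    set ℓ : Additive E' →ₗ[ℤ] Additive (Abelianization G) := q.toIntLinearMap with hℓ
    have hkfg : p'.ker.FG := by
      rw [← hkerA]
      have : Group.FG (Subgroup.map f π.ker) :=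
        Group.fg_of_surjective (f.subgroupMap_surjective π.ker)
      exact (Group.fg_iff_subgroup_fg _).mp this
    have hker : (LinearMap.ker ℓ).FG := by
      rw [Submodule.fg_iff_addSubgroup_fg]
      have heq : (LinearMap.ker ℓ).toAddSubgroup = Subgroup.toAddSubgroup p'.ker := by
        ext a; rfl
      rw [heq]
      exact (Subgroup.fg_iff_add_fg p'.ker).mp hkfg
    have htop : ((⊤ : Submodule ℤ (Additive E')).map ℓ).FG := by
      have hmt : (⊤ : Submodule ℤ (Additive E')).map ℓ = ⊤ := by
        rw [Submodule.map_top, LinearMap.range_eq_top]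
        exact fun c => hp's c
      rw [hmt]
      haveI : Group.FG (Abelianization G) := hab
      haveI : AddGroup.FG (Additive (Abelianization G)) := inferInstance
      haveI : Module.Finite ℤ (Additive (Abelianization G)) :=
        Module.Finite.iff_addGroup_fg.mpr inferInstance
      exact Module.finite_def.mp inferInstance
    have hfin : (⊤ : Submodule ℤ (Additive E')).FG :=
      Submodule.fg_of_fg_map_of_fg_inf_ker ℓ htop (by rwa [top_inf_eq])
    haveI : Module.Finite ℤ (Additive E') := Module.finite_def.mpr hfin
    haveI : AddGroup.FG (Additive E') := Module.Finite.iff_addGroup_fg.mp inferInstance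
    exact GroupFG.iff_add_fg.mpr inferInstance
  -- detect f x in a finite quotient of E'
  obtain ⟨F, _, _, φ, hφ⟩ := exists_monoidHom_ne_one hfx
  have hmem := hx' (φ.comp f).ker inferInstance (Subgroup.finiteIndex_ker _)
  exact hφ (by simpa [MonoidHom.mem_ker] using hmem)
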